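/- Point 1 of the main lemma: under the contraction condition, for each t ∈ {1,…,n} the function g_t (defined by g_t(x_1,…,x_t) = E[f(X_1,…,X_n) | X_1 = x_1,…,X_t = x_t], i.e. the conditional expectation functional) is separately Lipschitz and satisfies |g_t(x_1,…,x_t) − g_t(x'_1,…,x'_t)| ≤ Σ_{i=1}^{t−1} d(x_i, x'_i) + K_{n−t}(ρ) d(x_t, x'_t) for all x_1,…,x_t, x'_1,…,x'_t in X. -/

import Mathlib

open MeasureTheory ProbabilityTheory Finset

/-- `K_t(ρ) = (1 - ρ^(t+1))/(1 - ρ)`. -/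
noncomputable def Kgeom (ρ : ℝ) (t : ℕ) : ℝ := (1 - ρ ^ (t + 1)) / (1 - ρ)

/-- Backward recursion defining the conditional expectation functionals:
`gAux Pε F n f k = g_{n-k}`, i.e. `gAux _ _ _ _ 0 = g_n = f` and
`g_{t-1}(x) = ∫ g_t(x_1,…,x_{t-1}, F_t(x_{t-1}, y)) Pε(dy)`.
Coordinates of the chain are `x 1, …, x n`.  For the Markov chain
`X_t = F_t(X_{t-1}, ε_t)` with the ε's i.i.d. of law `Pε` and independent of `X_1`,
`gAux Pε F n f (n - t)` applied to `(X_1,…,X_t,…)` is a version of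
`E[f(X_1,…,X_n) | X_1,…,X_t]`. -/
noncomputable def gAux {𝓧 𝓨 : Type*} [MeasurableSpace 𝓨] (Pε : Measure 𝓨)
    (F : ℕ → 𝓧 → 𝓨 → 𝓧) (n : ℕ) (f : (ℕ → 𝓧) → ℝ) : ℕ → (ℕ → 𝓧) → ℝ
  | 0 => f
  | (k + 1) => fun x =>
      ∫ y, gAux Pε F n f k (Function.update x (n - k) (F (n - k) (x (n - k - 1)) y)) ∂Pε

lemma Kgeom_nonneg {ρ : ℝ} (hρ0 : 0 ≤ ρ) (hρ1 : ρ < 1) (k : ℕ) : 0 ≤ Kgeom ρ k := by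
  apply div_nonneg _ (by linarith)
  have := pow_le_one₀ hρ0 hρ1.le (n := k + 1)
  linarith

lemma Kgeom_succ {ρ : ℝ} (hρ1 : ρ < 1) (k : ℕ) : Kgeom ρ (k + 1) = 1 + ρ * Kgeom ρ k := by
  have h : (1 : ℝ) - ρ ≠ 0 := by intro h; apply absurd hρ1; simp [show ρ = 1 by linarith]
  unfold Kgeom
  rw [mul_div_assoc', one_add_div h, div_left_inj' h]
  ring

lemma gAux_lip {𝓧 𝓨 : Type*} [MetricSpace 𝓧] [MeasurableSpace 𝓧] [BorelSpace 𝓧]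
    [MeasurableSpace 𝓨] (Pε : Measure 𝓨) [IsProbabilityMeasure Pε]
    (F : ℕ → 𝓧 → 𝓨 → 𝓧) (hmF : ∀ t, Measurable (Function.uncurry (F t)))
    (ρ : ℝ) (hρ0 : 0 ≤ ρ) (hρ1 : ρ < 1)
    (hcontract : ∀ t x x', ∫ y, dist (F t x y) (F t x' y) ∂Pε ≤ ρ * dist x x')
    (hintc : ∀ t x x', Integrable (fun y => dist (F t x y) (F t x' y)) Pε)
    (hintH : ∀ t x y₀, Integrable (fun y => dist (F t x y) (F t x y₀)) Pε)
    (n : ℕ) (hn : 1 ≤ n) (f : (ℕ → 𝓧) → ℝ)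
    (hlip : ∀ x x', |f x - f x'| ≤ ∑ t ∈ Icc 1 n, dist (x t) (x' t)) :
    ∀ k, k < n → ∀ x x' : ℕ → 𝓧,
      |gAux Pε F n f k x - gAux Pε F n f k x'| ≤
        (∑ i ∈ Ico 1 (n - k), dist (x i) (x' i)) + Kgeom ρ k * dist (x (n - k)) (x' (n - k)) := by
  have hY : Nonempty 𝓨 := by
    by_contra h
    rw [not_nonempty_iff] at h
    have h1 := IsProbabilityMeasure.measure_univ (μ := Pε)
    rw [Set.univ_eq_empty_iff.mpr h, measure_empty] at h1
    exact zero_ne_one h1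
  obtain ⟨y₀⟩ := hY
  intro k
  induction k with
  | zero =>
    intro hk x x'
    have h0 : Kgeom ρ 0 = 1 := by
      unfold Kgeom
      rw [pow_one, div_self (by linarith)]
    simp only [gAux, h0, one_mul, Nat.sub_zero]
    calc |f x - f x'| ≤ ∑ t ∈ Icc 1 n, dist (x t) (x' t) := hlip x x'
    _ = (∑ i ∈ Ico 1 n, dist (x i) (x' i)) + dist (x n) (x' n) := by
        rcases Nat.exists_eq_add_of_le hn with ⟨m, rfl⟩
        rw [← Finset.Ico_add_one_right_eq_Icc, Finset.sum_Ico_succ_top (by omega)]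
  | succ k ih =>
    intro hk x x'
    have hkn : k < n := by omega
    set p := n - k with hp
    have hp2 : 2 ≤ p := by omega
    have hK : 0 ≤ Kgeom ρ k := Kgeom_nonneg hρ0 hρ1 k
    set g := gAux Pε F n f k with hg
    set a := x (n - k - 1)
    set a' := x' (n - k - 1)
    -- Lipschitz in the updated coordinate, for a fixed base point
    have hLip : ∀ (w : ℕ → 𝓧) (z z' : 𝓧),
        |g (Function.update w p z) - g (Function.update w p z')| ≤ Kgeom ρ k * dist z z' := by
      intro w z z'
      have := ih hkn (Function.update w p z) (Function.update w p z')
      have hsum : ∑ i ∈ Ico 1 (n - k), dist (Function.update w p z i) (Function.update w p z' i) = 0 := by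
        apply Finset.sum_eq_zero
        intro i hi
        rw [Finset.mem_Ico] at hi
        rw [Function.update_of_ne (by omega), Function.update_of_ne (by omega)]
        simp
      rw [hsum, Function.update_self, Function.update_self] at this
      simpa using this
    -- measurability and integrability of the integrands
    have hmeas : ∀ (w : ℕ → 𝓧) (b : 𝓧), Measurable (fun y => g (Function.update w p (F p b y))) := by
      intro w b
      have hc : Continuous (fun z => g (Function.update w p z)) := by
        have : LipschitzWith (Kgeom ρ k).toNNReal (fun z => g (Function.update w p z)) := by
          apply LipschitzWith.of_dist_le_mul
          intro z z'
          rw [Real.coe_toNNReal _ hK, Real.dist_eq]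
          exact hLip w z z'
        exact this.continuous
      exact hc.measurable.comp ((hmF p).comp (measurable_const.prodMk measurable_id))
    have hint : ∀ (w : ℕ → 𝓧) (b : 𝓧),
        Integrable (fun y => g (Function.update w p (F p b y))) Pε := by
      intro w b
      apply Integrable.mono' ((integrable_const (|g (Function.update w p (F p b y₀))|)).add
        ((hintH p b y₀).const_mul (Kgeom ρ k)))
        (hmeas w b).aestronglyMeasurable
      filter_upwards with y
      have h1 := hLip w (F p b y) (F p b y₀)
      have h2 := abs_sub_abs_le_abs_sub (g (Function.update w p (F p b y)))
        (g (Function.update w p (F p b y₀)))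
      simp only [Pi.add_apply, Real.norm_eq_abs]
      linarith
    have hA := hint x a
    have hA' := hint x' a'
    -- pointwise bound
    set S := ∑ i ∈ Ico 1 p, dist (x i) (x' i) with hS
    have hpt : ∀ y, |g (Function.update x p (F p a y)) - g (Function.update x' p (F p a' y))| ≤
        S + Kgeom ρ k * dist (F p a y) (F p a' y) := by
      intro y
      have := ih hkn (Function.update x p (F p a y)) (Function.update x' p (F p a' y))
      have hsum : ∑ i ∈ Ico 1 (n - k),
          dist (Function.update x p (F p a y) i) (Function.update x' p (F p a' y) i) = S := by
        apply Finset.sum_congr rfl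
        intro i hi
        rw [Finset.mem_Ico] at hi
        rw [Function.update_of_ne (by omega), Function.update_of_ne (by omega)]
      rw [hsum, Function.update_self, Function.update_self] at this
      exact this
    have key : |gAux Pε F n f (k+1) x - gAux Pε F n f (k+1) x'| ≤
        S + Kgeom ρ k * (ρ * dist a a') := by
      simp only [gAux]
      rw [← integral_sub hA hA']
      calc |∫ y, (g (Function.update x (n-k) (F (n-k) (x (n-k-1)) y)) -
              g (Function.update x' (n-k) (F (n-k) (x' (n-k-1)) y))) ∂Pε|
          ≤ ∫ y, |g (Function.update x p (F p a y)) - g (Function.update x' p (F p a' y))| ∂Pε :=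
            by
              have := norm_integral_le_integral_norm (μ := Pε)
                (fun y => g (Function.update x p (F p a y)) - g (Function.update x' p (F p a' y)))
              simpa [Real.norm_eq_abs, hp] using this
        _ ≤ ∫ y, (S + Kgeom ρ k * dist (F p a y) (F p a' y)) ∂Pε := by
            apply integral_mono (hA.sub hA').abs
              ((integrable_const S).add ((hintc p a a').const_mul _))
            intro y
            exact hpt y
        _ = S + Kgeom ρ k * ∫ y, dist (F p a y) (F p a' y) ∂Pε := by
            rw [integral_add (integrable_const S) ((hintc p a a').const_mul _),
              integral_const, integral_const_mul]
            simp
        _ ≤ S + Kgeom ρ k * (ρ * dist a a') :=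
            (add_le_add_iff_left _).mpr (mul_le_mul_of_nonneg_left (hcontract p a a') hK)
    -- rearrange
    have hsplit : S = (∑ i ∈ Ico 1 (p - 1), dist (x i) (x' i)) + dist (x (p-1)) (x' (p-1)) := by
      rw [hS]
      rcases Nat.exists_eq_add_of_le hp2 with ⟨m, hm⟩
      rw [show p = (p - 1) + 1 by omega, Finset.sum_Ico_succ_top (by omega)]
      simp
    have hidx : n - (k + 1) = p - 1 := by omega
    rw [hidx, Kgeom_succ hρ1]
    have hd : 0 ≤ dist (x (p-1)) (x' (p-1)) := dist_nonneg
    calc |gAux Pε F n f (k+1) x - gAux Pε F n f (k+1) x'|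
        ≤ S + Kgeom ρ k * (ρ * dist a a') := key
      _ = (∑ i ∈ Ico 1 (p - 1), dist (x i) (x' i)) +
            (1 + ρ * Kgeom ρ k) * dist (x (p-1)) (x' (p-1)) := by
          have ha : a = x (p - 1) := by simp [hp]; rfl
          have ha' : a' = x' (p - 1) := by simp [hp]; rfl
          rw [hsplit, ha, ha']
          ring

/-- Point 1 of the main lemma: each `g_t` is separately Lipschitz with
`|g_t(x_{1:t}) - g_t(x'_{1:t})| ≤ Σ_{i=1}^{t-1} d(x_i,x'_i) + K_{n-t}(ρ) d(x_t,x'_t)`. -/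
theorem gfun_separately_lipschitz
    {Ω : Type*} [MeasurableSpace Ω] (μ : Measure Ω) [IsProbabilityMeasure μ]
    {𝓧 : Type*} [MetricSpace 𝓧] [CompleteSpace 𝓧] [TopologicalSpace.SeparableSpace 𝓧]
    [MeasurableSpace 𝓧] [BorelSpace 𝓧]
    {𝓨 : Type*} [MetricSpace 𝓨] [CompleteSpace 𝓨] [TopologicalSpace.SeparableSpace 𝓨]
    [MeasurableSpace 𝓨] [BorelSpace 𝓨]
    (X : ℕ → Ω → 𝓧) (ε : ℕ → Ω → 𝓨) (Pε : Measure 𝓨) [IsProbabilityMeasure Pε]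
    (hmX1 : Measurable (X 1)) (hmε : ∀ t, Measurable (ε t))
    (hlaw : ∀ t, 2 ≤ t → μ.map (ε t) = Pε)
    (hiid : iIndepFun (m := fun _ : {t : ℕ // 2 ≤ t} => (inferInstance : MeasurableSpace 𝓨))
      (fun t : {t : ℕ // 2 ≤ t} => ε t.1) μ)
    (hindep : IndepFun (X 1) (fun ω => fun t : {t : ℕ // 2 ≤ t} => ε t.1 ω) μ)
    (F : ℕ → 𝓧 → 𝓨 → 𝓧) (hmF : ∀ t, Measurable (Function.uncurry (F t)))
    (hchain : ∀ t, 2 ≤ t → ∀ ω, X t ω = F t (X (t - 1) ω) (ε t ω))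
    (ρ : ℝ) (hρ0 : 0 ≤ ρ) (hρ1 : ρ < 1)
    (hcontract : ∀ t x x', ∫ y, dist (F t x y) (F t x' y) ∂Pε ≤ ρ * dist x x')
    (hintc : ∀ t x x', Integrable (fun y => dist (F t x y) (F t x' y)) Pε)
    (hintH : ∀ t x y₀, Integrable (fun y => dist (F t x y) (F t x y₀)) Pε)
    (n : ℕ) (hn : 1 ≤ n)
    (f : (ℕ → 𝓧) → ℝ) (hmf : Measurable f)
    (hlip : ∀ x x', |f x - f x'| ≤ ∑ t ∈ Icc 1 n, dist (x t) (x' t)) :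
    ∀ t, 1 ≤ t → t ≤ n → ∀ x x' : ℕ → 𝓧,
      |gAux Pε F n f (n - t) x - gAux Pε F n f (n - t) x'| ≤
        (∑ i ∈ Ico 1 t, dist (x i) (x' i)) + Kgeom ρ (n - t) * dist (x t) (x' t) := by
  intro t ht1 htn x x'
  have h := gAux_lip Pε F hmF ρ hρ0 hρ1 hcontract hintc hintH n hn f hlip (n - t)
    (by omega) x x'
  rwa [Nat.sub_sub_self htn] at h
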